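/- The integral identity ∫_{1/2}^1 dt / (4(1−t²)(4t²−1)²)^{1/3} = (1/12)·B(1/3, 1/6) holds, where B is the Beta function. -/

import Mathlib

open MeasureTheory

noncomputable def Beta (a b : ℝ) : ℝ := ∫ t in (0:ℝ)..1, t ^ (a-1) * (1-t) ^ (b-1)

namespace Stmt7

open Set

noncomputable def f (t : ℝ) : ℝ := 1 / (4 * (1 - t^2) * (4 * t^2 - 1)^2) ^ ((1:ℝ)/3)

noncomputable def G (s : ℝ) : ℝ := s ^ ((1:ℝ)/3 - 1) * (1 - s) ^ ((1:ℝ)/6 - 1)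

noncomputable def c (x : ℝ) : ℝ := Real.sqrt (3 - 3 * x ^ 2)

noncomputable def pp (x : ℝ) : ℝ := (c x + x) / 2
noncomputable def pm (x : ℝ) : ℝ := (c x - x) / 2
noncomputable def pp' (x : ℝ) : ℝ := (1 - 3 * x / c x) / 2
noncomputable def pm' (x : ℝ) : ℝ := -((1 + 3 * x / c x) / 2)

noncomputable def sg (x : ℝ) : ℝ := (1 - x ^ 2) ^ 2 * (1 - 4 * x ^ 2) / (1 - 3 * x ^ 2) ^ 2
noncomputable def sg' (x : ℝ) : ℝ := -(24 * x ^ 5 * (1 - x ^ 2) / (1 - 3 * x ^ 2) ^ 3)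

lemma pow6_eq {a b : ℝ} (ha : 0 ≤ a) (hb : 0 ≤ b) (h : a ^ 6 = b ^ 6) : a = b := by
  rcases lt_trichotomy a b with hlt | he | hgt
  · exact absurd h (ne_of_lt (pow_lt_pow_left₀ hlt ha (by norm_num)))
  · exact he
  · exact absurd h.symm (ne_of_lt (pow_lt_pow_left₀ hgt hb (by norm_num)))

lemma c_pos {x : ℝ} (h : x ^ 2 ≤ 1/4) : 0 < c x :=
  Real.sqrt_pos.2 (by nlinarith)

lemma c_sq {x : ℝ} (h : x ^ 2 ≤ 1/4) : c x ^ 2 = 3 - 3 * x ^ 2 :=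
  Real.sq_sqrt (by nlinarith)

lemma c_cont : Continuous c :=
  Real.continuous_sqrt.comp (by continuity)

lemma pp_cont : Continuous pp := ((c_cont.add continuous_id).div_const 2)

lemma pm_cont : Continuous pm := ((c_cont.sub continuous_id).div_const 2)

lemma c_half : c (1/2) = 3/2 := by
  rw [c, show (3 - 3 * ((1:ℝ)/2) ^ 2) = (3/2)^2 by norm_num,
    Real.sqrt_sq (by norm_num : (0:ℝ) ≤ 3/2)]

lemma c_zero : c 0 = Real.sqrt 3 := by rw [c]; norm_num

lemma pp_zero : pp 0 = Real.sqrt 3 / 2 := by rw [pp, c_zero]; ring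

lemma pp_half : pp (1/2) = 1 := by rw [pp, c_half]; norm_num

lemma pm_zero : pm 0 = Real.sqrt 3 / 2 := by rw [pm, c_zero]; ring

lemma pm_half : pm (1/2) = 1/2 := by rw [pm, c_half]; norm_num

lemma sg_zero : sg 0 = 1 := by rw [sg]; norm_num

lemma sg_half : sg (1/2) = 0 := by rw [sg]; norm_num

lemma hasDerivAt_c {x : ℝ} (h : (3:ℝ) - 3 * x ^ 2 ≠ 0) :
    HasDerivAt c (-(3 * (2 * x)) / (2 * c x)) x := by
  have h1 : HasDerivAt (fun y : ℝ => 3 - 3 * y ^ 2) (-(3 * (2 * x))) x := by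
    have := ((hasDerivAt_pow 2 x).const_mul 3).const_sub 3
    exact this.congr_deriv (by norm_num)
  exact h1.sqrt h

lemma hasDerivAt_pp {x : ℝ} (hx : x ∈ Ioo (0:ℝ) (1/2)) : HasDerivAt pp (pp' x) x := by
  obtain ⟨h0, h1⟩ := hx
  have hsq : x ^ 2 ≤ 1/4 := by nlinarith
  have hc0 : 0 < c x := c_pos hsq
  have hne : (3:ℝ) - 3 * x ^ 2 ≠ 0 := by nlinarith
  have h3 := ((hasDerivAt_c hne).add (hasDerivAt_id x)).div_const 2
  have hval : pp' x = (-(3 * (2 * x)) / (2 * c x) + 1) / 2 := by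
    rw [pp']
    field_simp [hc0.ne']
    ring
  rw [hval]
  exact h3

lemma hasDerivAt_pm {x : ℝ} (hx : x ∈ Ioo (0:ℝ) (1/2)) : HasDerivAt pm (pm' x) x := by
  obtain ⟨h0, h1⟩ := hx
  have hsq : x ^ 2 ≤ 1/4 := by nlinarith
  have hc0 : 0 < c x := c_pos hsq
  have hne : (3:ℝ) - 3 * x ^ 2 ≠ 0 := by nlinarith
  have h3 := ((hasDerivAt_c hne).sub (hasDerivAt_id x)).div_const 2
  have hval : pm' x = (-(3 * (2 * x)) / (2 * c x) - 1) / 2 := by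
    rw [pm']
    field_simp [hc0.ne']
    ring
  rw [hval]
  exact h3

lemma hasDerivAt_sg {x : ℝ} (hx : x ∈ Ioo (0:ℝ) (1/2)) : HasDerivAt sg (sg' x) x := by
  obtain ⟨h0, h1⟩ := hx
  have hd : (0:ℝ) < 1 - 3 * x ^ 2 := by nlinarith
  have hA : HasDerivAt (fun y : ℝ => 1 - y ^ 2) (-(2 * x)) x := by
    have := (hasDerivAt_pow 2 x).const_sub 1
    exact this.congr_deriv (by norm_num)
  have hA2 : HasDerivAt (fun y : ℝ => (1 - y ^ 2) ^ 2)
      (2 * (1 - x ^ 2) ^ 1 * -(2 * x)) x := by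
    have := hA.pow 2
    exact this.congr_deriv (by norm_num)
  have hB : HasDerivAt (fun y : ℝ => 1 - 4 * y ^ 2) (-(4 * (2 * x))) x := by
    have := ((hasDerivAt_pow 2 x).const_mul 4).const_sub 1
    exact this.congr_deriv (by norm_num)
  have hN := hA2.mul hB
  have hD3 : HasDerivAt (fun y : ℝ => 1 - 3 * y ^ 2) (-(3 * (2 * x))) x := by
    have := ((hasDerivAt_pow 2 x).const_mul 3).const_sub 1
    exact this.congr_deriv (by norm_num)
  have hD : HasDerivAt (fun y : ℝ => (1 - 3 * y ^ 2) ^ 2)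
      (2 * (1 - 3 * x ^ 2) ^ 1 * -(3 * (2 * x))) x := by
    have := hD3.pow 2
    exact this.congr_deriv (by norm_num)
  have hQ := hN.div hD (pow_ne_zero 2 hd.ne')
  refine hQ.congr_deriv ?_
  rw [sg']
  simp only [Pi.mul_apply]
  field_simp
  ring

lemma pp'_pos {x : ℝ} (hx : x ∈ Ioo (0:ℝ) (1/2)) : 0 < pp' x := by
  obtain ⟨h0, h1⟩ := hx
  have hsq : x ^ 2 ≤ 1/4 := by nlinarith
  have hc0 : 0 < c x := c_pos hsq
  have hc2 : c x ^ 2 = 3 - 3 * x ^ 2 := c_sq hsq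
  have h3x : 3 * x < c x := by nlinarith
  have : 3 * x / c x < 1 := (div_lt_one hc0).2 h3x
  rw [pp']
  linarith

lemma pm'_neg {x : ℝ} (hx : x ∈ Ioo (0:ℝ) (1/2)) : pm' x < 0 := by
  obtain ⟨h0, h1⟩ := hx
  have hsq : x ^ 2 ≤ 1/4 := by nlinarith
  have hc0 : 0 < c x := c_pos hsq
  have : 0 < 3 * x / c x := by positivity
  rw [pm']
  linarith

lemma sg'_neg {x : ℝ} (hx : x ∈ Ioo (0:ℝ) (1/2)) : sg' x < 0 := by
  obtain ⟨h0, h1⟩ := hx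
  have ha : (0:ℝ) < 1 - x ^ 2 := by nlinarith
  have hd : (0:ℝ) < 1 - 3 * x ^ 2 := by nlinarith
  rw [sg']
  have : 0 < 24 * x ^ 5 * (1 - x ^ 2) / (1 - 3 * x ^ 2) ^ 3 := by positivity
  linarith

lemma pp_mono : StrictMonoOn pp (Icc (0:ℝ) (1/2)) := by
  apply strictMonoOn_of_deriv_pos (convex_Icc _ _) pp_cont.continuousOn
  intro x hx
  rw [interior_Icc] at hx
  rw [(hasDerivAt_pp hx).deriv]
  exact pp'_pos hx

lemma pm_anti : StrictAntiOn pm (Icc (0:ℝ) (1/2)) := by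
  apply strictAntiOn_of_deriv_neg (convex_Icc _ _) pm_cont.continuousOn
  intro x hx
  rw [interior_Icc] at hx
  rw [(hasDerivAt_pm hx).deriv]
  exact pm'_neg hx

lemma sg_contOn : ContinuousOn sg (Icc (0:ℝ) (1/2)) := by
  apply ContinuousOn.div ((by continuity : Continuous fun x : ℝ =>
    (1 - x ^ 2) ^ 2 * (1 - 4 * x ^ 2)).continuousOn)
    ((by continuity : Continuous fun x : ℝ => (1 - 3 * x ^ 2) ^ 2).continuousOn)
  intro x hx
  obtain ⟨h0, h1⟩ := hx
  have : (0:ℝ) < 1 - 3 * x ^ 2 := by nlinarith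
  positivity

lemma sg_anti : StrictAntiOn sg (Icc (0:ℝ) (1/2)) := by
  apply strictAntiOn_of_deriv_neg (convex_Icc _ _) sg_contOn
  intro x hx
  rw [interior_Icc] at hx
  rw [(hasDerivAt_sg hx).deriv]
  exact sg'_neg hx

lemma pp_image : pp '' Ioo (0:ℝ) (1/2) = Ioo (Real.sqrt 3 / 2) 1 := by
  apply Subset.antisymm
  · rintro y ⟨x, hx, rfl⟩
    obtain ⟨h0, h1⟩ := hx
    constructor
    · have := pp_mono (by constructor <;> norm_num) ⟨h0.le, h1.le⟩ h0
      rwa [pp_zero] at this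
    · have := pp_mono ⟨h0.le, h1.le⟩ (by constructor <;> norm_num) h1
      rwa [pp_half] at this
  · have h := intermediate_value_Ioo (by norm_num : (0:ℝ) ≤ 1/2) pp_cont.continuousOn
    rwa [pp_zero, pp_half] at h

lemma pm_image : pm '' Ioo (0:ℝ) (1/2) = Ioo (1/2 : ℝ) (Real.sqrt 3 / 2) := by
  apply Subset.antisymm
  · rintro y ⟨x, hx, rfl⟩
    obtain ⟨h0, h1⟩ := hx
    constructor
    · have := pm_anti ⟨h0.le, h1.le⟩ (by constructor <;> norm_num) h1
      rwa [pm_half] at this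
    · have := pm_anti (by constructor <;> norm_num) ⟨h0.le, h1.le⟩ h0
      rwa [pm_zero] at this
  · have h := intermediate_value_Ioo' (by norm_num : (0:ℝ) ≤ 1/2) pm_cont.continuousOn
    rwa [pm_zero, pm_half] at h

lemma sg_image : sg '' Ioo (0:ℝ) (1/2) = Ioo (0:ℝ) 1 := by
  apply Subset.antisymm
  · rintro y ⟨x, hx, rfl⟩
    obtain ⟨h0, h1⟩ := hx
    constructor
    · have := sg_anti ⟨h0.le, h1.le⟩ (by constructor <;> norm_num) h1
      rwa [sg_half] at this
    · have := sg_anti (by constructor <;> norm_num) ⟨h0.le, h1.le⟩ h0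
      rwa [sg_zero] at this
  · have h := intermediate_value_Ioo' (by norm_num : (0:ℝ) ≤ 1/2) sg_contOn
    rwa [sg_zero, sg_half] at h

lemma pp_inj : InjOn pp (Ioo (0:ℝ) (1/2)) :=
  (pp_mono.mono Ioo_subset_Icc_self).injOn

lemma pm_inj : InjOn pm (Ioo (0:ℝ) (1/2)) :=
  (pm_anti.mono Ioo_subset_Icc_self).injOn

lemma sg_inj : InjOn sg (Ioo (0:ℝ) (1/2)) :=
  (sg_anti.mono Ioo_subset_Icc_self).injOn

lemma base_pp {x : ℝ} (hx : x ∈ Ioo (0:ℝ) (1/2)) :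
    4 * (1 - (pp x)^2) * (4 * (pp x)^2 - 1)^2 = 4 * (1 - x^2) * (4 * x^2 - 1)^2 := by
  obtain ⟨h0, h1⟩ := hx
  have hc2 : c x ^ 2 = 3 - 3 * x ^ 2 := c_sq (by nlinarith)
  rw [pp]
  linear_combination (3*(c x)^2 - (c x)^4 + 6*x*(c x) - 6*x*(c x)^3 - 9*x^2
    - 12*x^2*(c x)^2 - 2*x^3*(c x) + 21*x^4) * hc2

lemma base_pm {x : ℝ} (hx : x ∈ Ioo (0:ℝ) (1/2)) :
    4 * (1 - (pm x)^2) * (4 * (pm x)^2 - 1)^2 = 4 * (1 - x^2) * (4 * x^2 - 1)^2 := by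
  obtain ⟨h0, h1⟩ := hx
  have hc2 : c x ^ 2 = 3 - 3 * x ^ 2 := c_sq (by nlinarith)
  rw [pm]
  linear_combination (3*(c x)^2 - (c x)^4 - 6*x*(c x) + 6*x*(c x)^3 - 9*x^2
    - 12*x^2*(c x)^2 + 2*x^3*(c x) + 21*x^4) * hc2

lemma f_pp {x : ℝ} (hx : x ∈ Ioo (0:ℝ) (1/2)) : f (pp x) = f x := by
  rw [f, f, base_pp hx]

lemma f_pm {x : ℝ} (hx : x ∈ Ioo (0:ℝ) (1/2)) : f (pm x) = f x := by
  rw [f, f, base_pm hx]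

lemma base_pos_x {x : ℝ} (hx : x ∈ Ioo (0:ℝ) (1/2)) :
    0 < 4 * (1 - x^2) * (4 * x^2 - 1)^2 := by
  obtain ⟨h0, h1⟩ := hx
  have h : (4 * x^2 - 1)^2 = (1 - 4*x^2)^2 := by ring
  rw [h]
  have ha : (0:ℝ) < 1 - x ^ 2 := by nlinarith
  have hb : (0:ℝ) < 1 - 4 * x ^ 2 := by nlinarith
  positivity

lemma f_pos {x : ℝ} (hx : x ∈ Ioo (0:ℝ) (1/2)) : 0 < f x := by
  rw [f]; exact div_pos one_pos (Real.rpow_pos_of_pos (base_pos_x hx) _)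

lemma base_pos_t {t : ℝ} (h0 : 1/2 < t) (h1 : t < 1) :
    0 < 4 * (1 - t^2) * (4 * t^2 - 1)^2 := by
  have ha : (0:ℝ) < 1 - t ^ 2 := by nlinarith
  have hb : (0:ℝ) < 4 * t ^ 2 - 1 := by nlinarith
  positivity

lemma f_contOn {s : Set ℝ} (h : ∀ t ∈ s, 0 < 4 * (1 - t^2) * (4 * t^2 - 1)^2) :
    ContinuousOn f s := by
  apply ContinuousOn.div continuousOn_const
  · exact ContinuousOn.rpow_const
      ((by continuity : Continuous fun t : ℝ => 4 * (1 - t^2) * (4 * t^2 - 1)^2).continuousOn)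
      (fun t ht => Or.inl (h t ht).ne')
  · intro t ht
    exact (Real.rpow_pos_of_pos (h t ht) _).ne'

lemma stepA_pm {x : ℝ} (hx : x ∈ Ioo (0:ℝ) (1/2)) :
    |pm' x| * f (pm x) = (1 + 3 * x / c x) / 2 * f x := by
  rw [f_pm hx, abs_of_neg (pm'_neg hx), pm', neg_neg]

lemma stepA_pp {x : ℝ} (hx : x ∈ Ioo (0:ℝ) (1/2)) :
    |pp' x| * f (pp x) = (1 - 3 * x / c x) / 2 * f x := by
  rw [f_pp hx, abs_of_pos (pp'_pos hx), pp']

lemma stepB_pointwise {x : ℝ} (hx : x ∈ Ioo (0:ℝ) (1/2)) :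
    |sg' x| * G (sg x) = 12 * f x := by
  obtain ⟨h0, h1⟩ := hx
  have ha : (0:ℝ) < 1 - x ^ 2 := by nlinarith
  have hb : (0:ℝ) < 1 - 4 * x ^ 2 := by nlinarith
  have hd : (0:ℝ) < 1 - 3 * x ^ 2 := by nlinarith
  have hsg : sg x = (1 - x ^ 2) ^ 2 * (1 - 4 * x ^ 2) / (1 - 3 * x ^ 2) ^ 2 := rfl
  have hsgpos : 0 < sg x := by rw [hsg]; positivity
  have h1sg : 1 - sg x = 4 * x ^ 6 / (1 - 3 * x ^ 2) ^ 2 := by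
    rw [hsg, eq_div_iff (by positivity), sub_mul, div_mul_cancel₀ _ (by positivity)]; ring
  have h1sgpos : 0 < 1 - sg x := by rw [h1sg]; positivity
  have habs : |sg' x| = 24 * x ^ 5 * (1 - x ^ 2) / (1 - 3 * x ^ 2) ^ 3 := by
    rw [sg', abs_neg, abs_of_pos (by positivity)]
  have hbase : (4 * (1 - x^2) * (4 * x^2 - 1)^2 : ℝ) = 4 * (1 - x^2) * (1 - 4*x^2)^2 := by
    ring
  have hbpos : (0:ℝ) < 4 * (1 - x^2) * (1 - 4*x^2)^2 := by positivity
  have hr6 : ∀ (X : ℝ), 0 < X → ∀ (p : ℝ) (n : ℕ), p * 6 = -(n:ℝ) →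
      (X ^ p) ^ (6:ℕ) = (X ^ n)⁻¹ := by
    intro X hX p n hpn
    rw [← Real.rpow_natCast (X ^ p) 6, ← Real.rpow_mul hX.le]
    push_cast
    rw [hpn, Real.rpow_neg hX.le, Real.rpow_natCast]
  have hr6' : ∀ (X : ℝ), 0 < X → ∀ (p : ℝ) (n : ℕ), p * 6 = (n:ℝ) →
      (X ^ p) ^ (6:ℕ) = X ^ n := by
    intro X hX p n hpn
    rw [← Real.rpow_natCast (X ^ p) 6, ← Real.rpow_mul hX.le]
    push_cast
    rw [hpn, Real.rpow_natCast]
  apply pow6_eq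
  · have hG : 0 ≤ G (sg x) := by
      rw [G]
      exact mul_nonneg (Real.rpow_nonneg hsgpos.le _) (Real.rpow_nonneg h1sgpos.le _)
    exact mul_nonneg (abs_nonneg _) hG
  · exact mul_nonneg (by norm_num) (f_pos ⟨h0, h1⟩).le
  · have e1 := hr6 _ hsgpos ((1:ℝ)/3 - 1) 4 (by norm_num)
    have e2 := hr6 _ h1sgpos ((1:ℝ)/6 - 1) 5 (by norm_num)
    have e3 := hr6' _ hbpos ((1:ℝ)/3) 2 (by norm_num)
    rw [G, f, habs, hbase]
    simp only [mul_pow, div_pow, one_pow]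
    rw [e1, e2, e3, h1sg, hsg]
    rw [div_pow, div_pow]
    field_simp [h0.ne', ha.ne', hb.ne', hd.ne']
    rw [div_eq_div_iff (mul_ne_zero (by nlinarith : (0:ℝ) < 1 - x^2*3).ne'
      (pow_ne_zero _ (by nlinarith : (0:ℝ) < 1 - x^2*4).ne'))
      (pow_ne_zero _ (by nlinarith : (0:ℝ) < 1 - x^2*4).ne')]
    ring

lemma G_contOn_Ioc1 : ContinuousOn G (Ioc (0:ℝ) (1/2)) := by
  apply ContinuousOn.mul
  · exact ContinuousOn.rpow_const continuousOn_id
      (fun s hs => Or.inl hs.1.ne')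
  · exact ContinuousOn.rpow_const ((continuous_const.sub continuous_id).continuousOn)
      (fun s hs => Or.inl (ne_of_gt (by have := hs.2; simp only [sub_pos]; linarith)))

lemma G_contOn_Ioo2 : ContinuousOn G (Ioo (1/2:ℝ) 1) := by
  apply ContinuousOn.mul
  · exact ContinuousOn.rpow_const continuousOn_id
      (fun s hs => Or.inl (ne_of_gt (by have := hs.1; linarith)))
  · exact ContinuousOn.rpow_const ((continuous_const.sub continuous_id).continuousOn)
      (fun s hs => Or.inl (ne_of_gt (by have := hs.2; simp only [sub_pos]; linarith)))

lemma rpow_neg_exp_le {s b : ℝ} (hb : 0 < b) (hsb : b ≤ s) (e : ℝ) (he : e ≤ 0)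
    (hbe : b ^ e ≤ 2) : s ^ e ≤ 2 :=
  le_trans (Real.rpow_le_rpow_of_nonpos hb hsb he) hbe

lemma half_rpow_le {e : ℝ} (he : -1 ≤ e) : ((1:ℝ)/2) ^ e ≤ 2 := by
  have h1 : ((1:ℝ)/2) ^ e = 2 ^ (-e) := by
    rw [show ((1:ℝ)/2) = 2⁻¹ by norm_num, ← Real.rpow_neg_one 2,
      ← Real.rpow_mul (by norm_num : (0:ℝ) ≤ 2)]
    norm_num
  rw [h1]
  calc (2:ℝ) ^ (-e) ≤ 2 ^ (1:ℝ) := Real.rpow_le_rpow_of_exponent_le (by norm_num) (by linarith)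
  _ = 2 := Real.rpow_one 2

lemma Gint1 : IntegrableOn G (Ioc (0:ℝ) (1/2)) := by
  have hbig : IntegrableOn (fun s : ℝ => 2 * s ^ ((1:ℝ)/3 - 1)) (Ioc (0:ℝ) (1/2)) := by
    have h := (intervalIntegral.intervalIntegrable_rpow'
      (show (-1:ℝ) < 1/3 - 1 by norm_num) (a := 0) (b := 1/2)).const_mul 2
    exact (intervalIntegrable_iff_integrableOn_Ioc_of_le (by norm_num)).1 h
  apply Integrable.mono' hbig (G_contOn_Ioc1.aestronglyMeasurable measurableSet_Ioc)
  rw [ae_restrict_iff' measurableSet_Ioc]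
  apply ae_of_all
  intro s hs
  obtain ⟨hs0, hs1⟩ := hs
  rw [Real.norm_eq_abs, G, abs_of_nonneg (mul_nonneg (Real.rpow_nonneg hs0.le _)
    (Real.rpow_nonneg (by linarith : (0:ℝ) ≤ 1 - s) _))]
  have h2 : (1 - s) ^ ((1:ℝ)/6 - 1) ≤ 2 :=
    rpow_neg_exp_le (by norm_num) (by linarith) _ (by norm_num) (half_rpow_le (by norm_num))
  have h3 : 0 ≤ s ^ ((1:ℝ)/3 - 1) := Real.rpow_nonneg hs0.le _
  nlinarith [Real.rpow_nonneg (show (0:ℝ) ≤ 1 - s by linarith) ((1:ℝ)/6 - 1)]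

lemma Gint2 : IntegrableOn G (Ioo (1/2:ℝ) 1) := by
  have hbig : IntegrableOn (fun s : ℝ => 2 * (1 - s) ^ ((1:ℝ)/6 - 1)) (Ioo (1/2:ℝ) 1) := by
    have h0 : IntervalIntegrable (fun x : ℝ => x ^ ((1:ℝ)/6 - 1)) volume 0 (1/2) :=
      intervalIntegral.intervalIntegrable_rpow' (by norm_num)
    have h1 := h0.comp_sub_left 1
    rw [show (1:ℝ) - 0 = 1 by norm_num, show (1:ℝ) - 1/2 = 1/2 by norm_num] at h1
    have h2 := h1.symm.const_mul 2
    exact ((intervalIntegrable_iff_integrableOn_Ioc_of_le (by norm_num)).1 h2).mono_set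
      Ioo_subset_Ioc_self
  apply Integrable.mono' hbig (G_contOn_Ioo2.aestronglyMeasurable measurableSet_Ioo)
  rw [ae_restrict_iff' measurableSet_Ioo]
  apply ae_of_all
  intro s hs
  obtain ⟨hs0, hs1⟩ := hs
  rw [Real.norm_eq_abs, G, abs_of_nonneg (mul_nonneg
    (Real.rpow_nonneg (by linarith : (0:ℝ) ≤ s) _)
    (Real.rpow_nonneg (by linarith : (0:ℝ) ≤ 1 - s) _))]
  have h2 : s ^ ((1:ℝ)/3 - 1) ≤ 2 :=
    rpow_neg_exp_le (by norm_num) hs0.le _ (by norm_num) (half_rpow_le (by norm_num))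
  have h3 : 0 ≤ (1 - s) ^ ((1:ℝ)/6 - 1) := Real.rpow_nonneg (by linarith) _
  nlinarith [Real.rpow_nonneg (show (0:ℝ) ≤ s by linarith) ((1:ℝ)/3 - 1)]

lemma Gint : IntegrableOn G (Ioo (0:ℝ) 1) := by
  apply (Gint1.union Gint2).mono_set
  intro s hs
  obtain ⟨hs0, hs1⟩ := hs
  rcases le_or_gt s (1/2) with h | h
  · exact Or.inl ⟨hs0, h⟩
  · exact Or.inr ⟨h, hs1⟩

end Stmt7

open Stmt7 Set

theorem stmt_7 :
    (∫ t in (1/2:ℝ)..1, 1 / (4 * (1 - t^2) * (4 * t^2 - 1)^2) ^ ((1:ℝ)/3)) = (1/12) * Beta (1/3) (1/6) := by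
  have sqrt3_lt : Real.sqrt 3 < 2 := by
    rw [show (2:ℝ) = Real.sqrt 4 by
      rw [show (4:ℝ) = 2^2 by norm_num, Real.sqrt_sq (by norm_num : (0:ℝ) ≤ 2)]]
    exact Real.sqrt_lt_sqrt (by norm_num) (by norm_num)
  have sqrt3_gt : 1 < Real.sqrt 3 := by
    rw [show (1:ℝ) = Real.sqrt 1 by rw [Real.sqrt_one]]
    exact Real.sqrt_lt_sqrt (by norm_num) (by norm_num)
  have h12 : (1/2 : ℝ) < Real.sqrt 3 / 2 := by linarith
  have hs1 : Real.sqrt 3 / 2 < 1 := by linarith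
  have hmeas : MeasurableSet (Ioo (0:ℝ) (1/2)) := measurableSet_Ioo
  -- replace integrand with f
  have hI : (∫ t in (1/2:ℝ)..1, 1 / (4 * (1 - t^2) * (4 * t^2 - 1)^2) ^ ((1:ℝ)/3))
      = ∫ t in Ioo (1/2:ℝ) 1, f t := by
    rw [intervalIntegral.integral_of_le (by norm_num : (1/2:ℝ) ≤ 1),
      MeasureTheory.integral_Ioc_eq_integral_Ioo]
    simp only [f]
  have hBeta : Beta (1/3) (1/6) = ∫ s in Ioo (0:ℝ) 1, G s := by
    rw [Beta, intervalIntegral.integral_of_le (by norm_num : (0:ℝ) ≤ 1),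
      MeasureTheory.integral_Ioc_eq_integral_Ioo]
    simp only [G]
  -- derivative hypotheses within the set
  have hppW : ∀ x ∈ Ioo (0:ℝ) (1/2), HasDerivWithinAt pp (pp' x) (Ioo (0:ℝ) (1/2)) x :=
    fun x hx => (hasDerivAt_pp hx).hasDerivWithinAt
  have hpmW : ∀ x ∈ Ioo (0:ℝ) (1/2), HasDerivWithinAt pm (pm' x) (Ioo (0:ℝ) (1/2)) x :=
    fun x hx => (hasDerivAt_pm hx).hasDerivWithinAt
  have hsgW : ∀ x ∈ Ioo (0:ℝ) (1/2), HasDerivWithinAt sg (sg' x) (Ioo (0:ℝ) (1/2)) x :=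
    fun x hx => (hasDerivAt_sg hx).hasDerivWithinAt
  -- step B : change of variables via sg
  have hsub_sg : ∫ s in Ioo (0:ℝ) 1, G s = ∫ x in Ioo (0:ℝ) (1/2), |sg' x| • G (sg x) := by
    rw [← sg_image]
    exact integral_image_eq_integral_abs_deriv_smul hmeas hsgW sg_inj G
  have hGsg : EqOn (fun x => |sg' x| • G (sg x)) (fun x => 12 * f x) (Ioo (0:ℝ) (1/2)) :=
    fun x hx => by simp only [smul_eq_mul]; exact stepB_pointwise hx
  have h2 : ∫ s in Ioo (0:ℝ) 1, G s = 12 * ∫ x in Ioo (0:ℝ) (1/2), f x := by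
    rw [hsub_sg, MeasureTheory.setIntegral_congr_fun hmeas hGsg,
      MeasureTheory.integral_const_mul]
  -- integrability of f on (0, 1/2)
  have hfS : IntegrableOn f (Ioo (0:ℝ) (1/2)) := by
    have h0 : IntegrableOn (fun x => |sg' x| • G (sg x)) (Ioo (0:ℝ) (1/2)) := by
      apply (integrableOn_image_iff_integrableOn_abs_deriv_smul hmeas hsgW sg_inj G).1
      rw [sg_image]
      exact Gint
    have h12f : IntegrableOn (fun x => 12 * f x) (Ioo (0:ℝ) (1/2)) :=
      h0.congr_fun hGsg hmeas
    have h' := h12f.const_mul ((1:ℝ)/12)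
    have heq : (fun x => (1:ℝ)/12 * (12 * f x)) = f := by funext x; ring
    rwa [heq] at h'
  -- coefficient bounds
  have hcoef : ∀ x ∈ Ioo (0:ℝ) (1/2), 0 ≤ 3 * x / c x ∧ 3 * x / c x < 1 := by
    intro x hx
    obtain ⟨h0, h1⟩ := hx
    have hsq : x ^ 2 ≤ 1/4 := by nlinarith
    have hc0 : 0 < c x := c_pos hsq
    have hc2 : c x ^ 2 = 3 - 3 * x ^ 2 := c_sq hsq
    have h3x : 3 * x < c x := by nlinarith
    exact ⟨by positivity, (div_lt_one hc0).2 h3x⟩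
  -- c is nonvanishing on the closed interval ⇒ continuity of coefficients
  have hcont_coef : ContinuousOn (fun x => 3 * x / c x) (Ioo (0:ℝ) (1/2)) := by
    apply ContinuousOn.div ((continuous_const.mul continuous_id).continuousOn)
      c_cont.continuousOn
    intro x hx
    obtain ⟨h0, h1⟩ := hx
    exact (c_pos (by nlinarith)).ne'
  have hfScont : ContinuousOn f (Ioo (0:ℝ) (1/2)) := f_contOn (fun t ht => base_pos_x ht)
  -- integrability of the two pullback integrands
  have hintp : IntegrableOn (fun x => (1 - 3 * x / c x) / 2 * f x) (Ioo (0:ℝ) (1/2)) := by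
    apply Integrable.mono' hfS
    · exact (((continuousOn_const.sub hcont_coef).div_const 2).mul hfScont).aestronglyMeasurable
        hmeas
    · rw [ae_restrict_iff' hmeas]
      apply ae_of_all
      intro x hx
      obtain ⟨hge, hlt⟩ := hcoef x hx
      rw [Real.norm_eq_abs, abs_mul, abs_of_nonneg (f_pos hx).le,
        abs_of_nonneg (by linarith : (0:ℝ) ≤ (1 - 3 * x / c x) / 2)]
      nlinarith [(f_pos hx).le]
  have hintm : IntegrableOn (fun x => (1 + 3 * x / c x) / 2 * f x) (Ioo (0:ℝ) (1/2)) := by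
    apply Integrable.mono' hfS
    · exact (((continuousOn_const.add hcont_coef).div_const 2).mul hfScont).aestronglyMeasurable
        hmeas
    · rw [ae_restrict_iff' hmeas]
      apply ae_of_all
      intro x hx
      obtain ⟨hge, hlt⟩ := hcoef x hx
      rw [Real.norm_eq_abs, abs_mul, abs_of_nonneg (f_pos hx).le,
        abs_of_nonneg (by linarith : (0:ℝ) ≤ (1 + 3 * x / c x) / 2)]
      nlinarith [(f_pos hx).le]
  -- change of variables for the two pieces
  have hEqp : EqOn (fun x => |pp' x| • f (pp x)) (fun x => (1 - 3 * x / c x) / 2 * f x)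
      (Ioo (0:ℝ) (1/2)) := fun x hx => by
    simp only [smul_eq_mul]; exact stepA_pp hx
  have hEqm : EqOn (fun x => |pm' x| • f (pm x)) (fun x => (1 + 3 * x / c x) / 2 * f x)
      (Ioo (0:ℝ) (1/2)) := fun x hx => by
    simp only [smul_eq_mul]; exact stepA_pm hx
  have hsub_pp : ∫ t in Ioo (Real.sqrt 3 / 2) 1, f t
      = ∫ x in Ioo (0:ℝ) (1/2), (1 - 3 * x / c x) / 2 * f x := by
    rw [← pp_image, integral_image_eq_integral_abs_deriv_smul hmeas hppW pp_inj f,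
      MeasureTheory.setIntegral_congr_fun hmeas hEqp]
  have hsub_pm : ∫ t in Ioo (1/2:ℝ) (Real.sqrt 3 / 2), f t
      = ∫ x in Ioo (0:ℝ) (1/2), (1 + 3 * x / c x) / 2 * f x := by
    rw [← pm_image, integral_image_eq_integral_abs_deriv_smul hmeas hpmW pm_inj f,
      MeasureTheory.setIntegral_congr_fun hmeas hEqm]
  -- integrability of f on the two pieces
  have hfp : IntegrableOn f (Ioo (Real.sqrt 3 / 2) 1) := by
    rw [← pp_image]
    apply (integrableOn_image_iff_integrableOn_abs_deriv_smul hmeas hppW pp_inj f).2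
    exact hintp.congr_fun (fun x hx => (hEqp hx).symm) hmeas
  have hfm : IntegrableOn f (Ioo (1/2:ℝ) (Real.sqrt 3 / 2)) := by
    rw [← pm_image]
    apply (integrableOn_image_iff_integrableOn_abs_deriv_smul hmeas hpmW pm_inj f).2
    exact hintm.congr_fun (fun x hx => (hEqm hx).symm) hmeas
  -- split the integral at √3/2
  have hsplit : ∫ t in Ioo (1/2:ℝ) 1, f t
      = (∫ t in Ioo (1/2:ℝ) (Real.sqrt 3 / 2), f t) + ∫ t in Ioo (Real.sqrt 3 / 2) 1, f t := by
    rw [← MeasureTheory.integral_Ioc_eq_integral_Ioo,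
      ← Set.Ioc_union_Ioc_eq_Ioc h12.le hs1.le,
      MeasureTheory.setIntegral_union (Set.Ioc_disjoint_Ioc_of_le le_rfl) measurableSet_Ioc
        ((integrableOn_Ioc_iff_integrableOn_Ioo).2 hfm)
        ((integrableOn_Ioc_iff_integrableOn_Ioo).2 hfp),
      MeasureTheory.integral_Ioc_eq_integral_Ioo, MeasureTheory.integral_Ioc_eq_integral_Ioo]
  -- combine everything
  have hsum : (∫ x in Ioo (0:ℝ) (1/2), (1 + 3 * x / c x) / 2 * f x)
      + (∫ x in Ioo (0:ℝ) (1/2), (1 - 3 * x / c x) / 2 * f x)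
      = ∫ x in Ioo (0:ℝ) (1/2), f x := by
    rw [← MeasureTheory.integral_add hintm hintp]
    apply MeasureTheory.setIntegral_congr_fun hmeas
    intro x _
    ring
  rw [hI, hsplit, hsub_pp, hsub_pm, hsum, hBeta, h2]
  ring
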